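/- arXiv:2007.13240 — 3 statements merged into one kernel-verified Lean document; each statement's English description precedes it below -/
import Mathlib

section
/- For every sequence of n independent nonnegative real-valued random variables v_1,...,v_n, if t is a threshold such that the probability that no v_i is at least t equals 1/2, then the stopping rule that accepts the first prize with value at least t obtains expected value at least (1/2)·E[max_i v_i]. -/
open MeasureTheory ProbabilityTheory

/-- The value obtained by the `t`-threshold stopping rule: accept the first prize `i`
with `v i ≥ t` (obtaining `v i`), and obtain `0` if no prize meets the threshold. -/
noncomputable def thresholdPayoff {Ω : Type*} {n : ℕ} (t : ℝ) (v : Fin n → Ω → ℝ) (ω : Ω) : ℝ :=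
  if h : ∃ k, t ≤ v k ω then v (Fin.find (fun i => t ≤ v i ω) h) ω else 0

/-- **Prophet inequality** (Samuel-Cahn): if `t` is a threshold such that with probability
exactly `1/2` no prize value reaches `t`, then the `t`-threshold rule obtains expected value
at least half of the expected maximum prize value. -/
theorem prophet_inequality {Ω : Type*} [MeasurableSpace Ω] (μ : Measure Ω)
    [IsProbabilityMeasure μ] {n : ℕ} (hn : 0 < n) (t : ℝ) (v : Fin n → Ω → ℝ)
    (hmeas : ∀ i, Measurable (v i))
    (hnonneg : ∀ i ω, 0 ≤ v i ω)
    (hindep : iIndepFun v μ)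
    (hint : ∀ i, Integrable (v i) μ)
    (hintmax : Integrable (fun ω => (Finset.univ.sup' (Finset.univ_nonempty_iff.2 ⟨⟨0, hn⟩⟩)
      fun i => v i ω)) μ)
    (hintpay : Integrable (thresholdPayoff t v) μ)
    (hq : μ {ω | ∀ i, v i ω < t} = 1/2) :
    (1/2) * ∫ ω, (Finset.univ.sup' (Finset.univ_nonempty_iff.2 ⟨⟨0, hn⟩⟩) fun i => v i ω) ∂μ
      ≤ ∫ ω, thresholdPayoff t v ω ∂μ := by
  classical
  -- the bad set is measurable
  have hbadmeas : MeasurableSet {ω | ∀ i, v i ω < t} := by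
    have : {ω | ∀ i, v i ω < t} = ⋂ i, {ω | v i ω < t} := by ext ω; simp
    rw [this]
    exact MeasurableSet.iInter fun i => measurableSet_lt (hmeas i) measurable_const
  -- the threshold is positive
  have ht : 0 < t := by
    by_contra h
    push_neg at h
    have hempty : {ω | ∀ i, v i ω < t} = ∅ := by
      ext ω
      simp only [Set.mem_setOf_eq, Set.mem_empty_iff_false, iff_false, not_forall, not_lt]
      exact ⟨⟨0, hn⟩, h.trans (hnonneg _ ω)⟩
    rw [hempty] at hq
    rw [measure_empty] at hq
    have : (1 : ENNReal)/2 ≠ 0 := by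
      simp
    exact this hq.symm
  -- surplus functions
  set g : Fin n → Ω → ℝ := fun i ω => max (v i ω - t) 0 with hgdef
  have hg_meas : ∀ i, Measurable (g i) :=
    fun i => ((hmeas i).sub measurable_const).max measurable_const
  have hg_nonneg : ∀ i ω, 0 ≤ g i ω := fun i ω => le_max_right _ _
  have hg_int : ∀ i, Integrable (g i) μ :=
    fun i => ((hint i).sub (integrable_const t)).pos_part
  have hg_int_nonneg : ∀ i, 0 ≤ ∫ ω, g i ω ∂μ :=
    fun i => integral_nonneg (fun ω => hg_nonneg i ω)
  -- the events
  set B : Fin n → Set Ω := fun i => {ω | ∀ j, j < i → v j ω < t} with hBdef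
  set A : Fin n → Set Ω := fun i => B i ∩ {ω | t ≤ v i ω} with hAdef
  have hBmeas : ∀ i, MeasurableSet (B i) := by
    intro i
    have : B i = ⋂ j, ⋂ _ : j < i, {ω | v j ω < t} := by ext ω; simp [hBdef]
    rw [this]
    exact MeasurableSet.iInter fun j => MeasurableSet.iInter fun _ =>
      measurableSet_lt (hmeas j) measurable_const
  have hAmeas : ∀ i, MeasurableSet (A i) :=
    fun i => (hBmeas i).inter (measurableSet_le measurable_const (hmeas i))
  -- pointwise decomposition of the payoff
  have hpt : ∀ ω, thresholdPayoff t v ω = ∑ i, (A i).indicator (fun ω => t + g i ω) ω := by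
    intro ω
    by_cases hex : ∃ k, t ≤ v k ω
    swap
    · have hfind : ∀ i, ¬ t ≤ v i ω := fun i hi => hex ⟨i, hi⟩
      have h0 : thresholdPayoff t v ω = 0 := by
        unfold thresholdPayoff
        rw [dif_neg hex]
      rw [h0, Finset.sum_eq_zero]
      intro i _
      exact Set.indicator_of_notMem (fun hmem => hfind i hmem.2) _
    · set i := Fin.find (fun i => t ≤ v i ω) hex with hi_def
      have hpi : t ≤ v i ω := Fin.find_spec hex
      have hmin : ∀ j, t ≤ v j ω → i ≤ j := fun j hj => Fin.find_le_of_pos hex hj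
      have h0 : thresholdPayoff t v ω = v i ω := by
        unfold thresholdPayoff
        rw [dif_pos hex]
      have hiA : ω ∈ A i := by
        refine ⟨fun j hj => ?_, hpi⟩
        by_contra h
        push_neg at h
        exact absurd (hmin j h) (not_le.2 hj)
      rw [h0, Finset.sum_eq_single i]
      · rw [Set.indicator_of_mem hiA]
        simp only [hgdef]
        rw [max_eq_left (by linarith)]
        ring
      · intro j _ hji
        refine Set.indicator_of_notMem (fun hmem => ?_) _
        have hij : i ≤ j := hmin j hmem.2
        rcases lt_or_eq_of_le hij with h | h
        · exact absurd hpi (not_le.2 (hmem.1 i h))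
        · exact hji h.symm
      · intro h
        exact absurd (Finset.mem_univ i) h
  -- integral decomposition
  have hterm_int : ∀ i, Integrable ((A i).indicator (fun ω => t + g i ω)) μ :=
    fun i => (((integrable_const t).add (hg_int i)).indicator (hAmeas i))
  have hInt_eq : ∫ ω, thresholdPayoff t v ω ∂μ
      = ∑ i, (t * (μ (A i)).toReal + ∫ ω in A i, g i ω ∂μ) := by
    calc ∫ ω, thresholdPayoff t v ω ∂μ
        = ∫ ω, ∑ i, (A i).indicator (fun ω => t + g i ω) ω ∂μ :=
          integral_congr_ae (Filter.Eventually.of_forall hpt)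
      _ = ∑ i, ∫ ω, (A i).indicator (fun ω => t + g i ω) ω ∂μ :=
          integral_finset_sum _ (fun i _ => hterm_int i)
      _ = ∑ i, (t * (μ (A i)).toReal + ∫ ω in A i, g i ω ∂μ) := by
          refine Finset.sum_congr rfl fun i _ => ?_
          rw [integral_indicator (hAmeas i),
            integral_add (integrable_const t).integrableOn (hg_int i).integrableOn,
            setIntegral_const]
          simp [mul_comm]
          left; rfl
  -- disjointness of the A i
  have hdisj' : ∀ i j : Fin n, i < j → Disjoint (A i) (A j) := by
    intro i j hij
    rw [Set.disjoint_left]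
    rintro ω ⟨hB1, hvi⟩ ⟨hB2, _⟩
    exact absurd hvi (not_le.2 (hB2 i hij))
  have hdisj : Pairwise (Function.onFun Disjoint A) := by
    intro i j hij
    rcases hij.lt_or_gt with h | h
    · exact hdisj' i j h
    · exact (hdisj' j i h).symm
  -- union of the A i
  have hU : (⋃ i, A i) = {ω | ∀ i, v i ω < t}ᶜ := by
    ext ω
    simp only [Set.mem_iUnion, Set.mem_compl_iff, Set.mem_setOf_eq, not_forall, not_lt]
    constructor
    · rintro ⟨i, _, h2⟩
      exact ⟨i, h2⟩
    · rintro ⟨i, hi⟩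
      refine ⟨Fin.find (fun j => t ≤ v j ω) ⟨i, hi⟩, fun k hk => ?_,
        Fin.find_spec (p := fun j => t ≤ v j ω) ⟨i, hi⟩⟩
      by_contra h
      push_neg at h
      exact Fin.find_min ⟨i, hi⟩ hk h
  have hμU : μ (⋃ i, A i) = 1/2 := by
    rw [hU, measure_compl hbadmeas (measure_ne_top μ _), hq, measure_univ]
    rw [ENNReal.sub_half ENNReal.one_ne_top]
  have hsumA : ∑ i, (μ (A i)).toReal = 1/2 := by
    have h1 : μ (⋃ i, A i) = ∑' i, μ (A i) := measure_iUnion hdisj (fun i => hAmeas i)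
    rw [hμU, tsum_fintype] at h1
    have h2 : (∑ i, μ (A i)).toReal = ((1 : ENNReal)/2).toReal := by rw [← h1]
    rw [ENNReal.toReal_sum (fun i _ => measure_ne_top μ _)] at h2
    rw [h2]
    simp
  -- independence step
  have hset_int : ∀ i : Fin n, ∫ ω in A i, g i ω ∂μ = (μ (B i)).toReal * ∫ ω, g i ω ∂μ := by
    intro i
    have h1 : (A i).indicator (g i) = (B i).indicator (g i) := by
      funext ω
      by_cases hB : ω ∈ B i
      · by_cases hv : t ≤ v i ω
        · rw [Set.indicator_of_mem (Set.mem_inter hB hv), Set.indicator_of_mem hB]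
        · rw [Set.indicator_of_notMem (fun h => hv h.2), Set.indicator_of_mem hB]
          push_neg at hv
          simp only [hgdef]
          rw [max_eq_right (by linarith)]
      · rw [Set.indicator_of_notMem (fun h => hB h.1), Set.indicator_of_notMem hB]
    set S : Finset (Fin n) := Finset.univ.filter (· < i) with hSdef
    have hiS : i ∉ S := by simp [hSdef]
    have hST : Disjoint S {i} := Finset.disjoint_singleton_right.mpr hiS
    have hIF := hindep.indepFun_finset S {i} hST hmeas
    set φ : ({x // x ∈ S} → ℝ) → ℝ :=
      Set.indicator {x : {x // x ∈ S} → ℝ | ∀ j, x j < t} (fun _ => 1) with hφdef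
    have hφ : Measurable φ := by
      apply Measurable.indicator measurable_const
      have : {x : {x // x ∈ S} → ℝ | ∀ j, x j < t} = ⋂ j, {x | x j < t} := by
        ext x; simp
      rw [this]
      exact MeasurableSet.iInter fun j =>
        measurableSet_lt (measurable_pi_apply j) measurable_const
    set ψ : ({x // x ∈ ({i} : Finset (Fin n))} → ℝ) → ℝ :=
      fun x => max (x ⟨i, Finset.mem_singleton_self i⟩ - t) 0 with hψdef
    have hψ : Measurable ψ :=
      ((measurable_pi_apply _).sub measurable_const).max measurable_const
    have hIF2 : IndepFun (φ ∘ (fun a (j : {x // x ∈ S}) => v j a))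
        (ψ ∘ (fun a (j : {x // x ∈ ({i} : Finset (Fin n))}) => v j a)) μ :=
      hIF.comp hφ hψ
    set X : Ω → ℝ := (B i).indicator (fun _ => 1) with hXdef
    have hXeq : X = φ ∘ (fun ω (j : {x // x ∈ S}) => v j ω) := by
      funext ω
      by_cases hB : ω ∈ B i
      · have : (fun j : {x // x ∈ S} => v j ω) ∈
            {x : {x // x ∈ S} → ℝ | ∀ j, x j < t} := by
          intro j
          exact hB j.1 (Finset.mem_filter.mp j.2).2
        simp only [hXdef, Function.comp_apply, hφdef]
        rw [Set.indicator_of_mem hB, Set.indicator_of_mem this]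
      · have : (fun j : {x // x ∈ S} => v j ω) ∉
            {x : {x // x ∈ S} → ℝ | ∀ j, x j < t} := by
          intro hx
          apply hB
          intro j hj
          exact hx ⟨j, Finset.mem_filter.mpr ⟨Finset.mem_univ j, hj⟩⟩
        simp only [hXdef, Function.comp_apply, hφdef]
        rw [Set.indicator_of_notMem hB, Set.indicator_of_notMem this]
    have hYeq : g i = ψ ∘ (fun ω (j : {x // x ∈ ({i} : Finset (Fin n))}) => v j ω) := by
      funext ω
      rfl
    rw [← hXeq, ← hYeq] at hIF2
    have hX_meas : Measurable X := measurable_const.indicator (hBmeas i)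
    have hkey := IndepFun.integral_mul_eq_mul_integral hIF2 hX_meas.aestronglyMeasurable (hg_meas i).aestronglyMeasurable
    have hXg : (X * g i) = (B i).indicator (g i) := by
      funext ω
      by_cases h : ω ∈ B i <;>
        simp [hXdef, Set.indicator_of_mem, Set.indicator_of_notMem, h]
    have hX_int : ∫ ω, X ω ∂μ = (μ (B i)).toReal := by
      simp only [hXdef]
      rw [integral_indicator_const (1 : ℝ) (hBmeas i)]
      simp
      rfl
    rw [← integral_indicator (hAmeas i)]
    calc ∫ ω, (A i).indicator (g i) ω ∂μ
        = ∫ ω, (B i).indicator (g i) ω ∂μ := by rw [h1]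
      _ = ∫ ω, (X * g i) ω ∂μ := by rw [hXg]
      _ = (∫ ω, X ω ∂μ) * ∫ ω, g i ω ∂μ := hkey
      _ = (μ (B i)).toReal * ∫ ω, g i ω ∂μ := by rw [hX_int]
  -- lower bound on μ (B i)
  have hBge : ∀ i, (1/2 : ℝ) ≤ (μ (B i)).toReal := by
    intro i
    have hsub : {ω | ∀ j, v j ω < t} ⊆ B i := fun ω hω j _ => hω j
    have h1 := measure_mono (μ := μ) hsub
    rw [hq] at h1
    have h2 := ENNReal.toReal_mono (measure_ne_top μ _) h1
    calc (1/2 : ℝ) = ((1 : ENNReal)/2).toReal := by simp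
      _ ≤ (μ (B i)).toReal := h2
  -- the max is bounded by t plus the sum of surpluses
  have hmax_le : ∀ ω, (Finset.univ.sup' (Finset.univ_nonempty_iff.2 ⟨⟨0, hn⟩⟩)
      fun i => v i ω) ≤ t + ∑ i, g i ω := by
    intro ω
    apply Finset.sup'_le
    intro i _
    have h1 : v i ω - t ≤ g i ω := le_max_left _ _
    have h2 : g i ω ≤ ∑ j, g j ω :=
      Finset.single_le_sum (fun j _ => hg_nonneg j ω) (Finset.mem_univ i)
    linarith
  have hmax_int_le : ∫ ω, (Finset.univ.sup' (Finset.univ_nonempty_iff.2 ⟨⟨0, hn⟩⟩)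
      fun i => v i ω) ∂μ ≤ t + ∑ i, ∫ ω, g i ω ∂μ := by
    have hsum_int : Integrable (fun ω => ∑ i, g i ω) μ :=
      integrable_finset_sum _ (fun i _ => hg_int i)
    have h := integral_mono hintmax ((integrable_const t).add hsum_int)
      (fun ω => hmax_le ω)
    simp only [Pi.add_apply] at h
    rwa [integral_add (integrable_const t) hsum_int, integral_const,
      integral_finset_sum _ (fun i _ => hg_int i), probReal_univ,
      one_smul] at h
  -- put everything together
  rw [hInt_eq]
  have heq : ∑ i, (t * (μ (A i)).toReal + ∫ ω in A i, g i ω ∂μ)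
      = t * (1/2) + ∑ i, (μ (B i)).toReal * ∫ ω, g i ω ∂μ := by
    rw [Finset.sum_add_distrib, ← Finset.mul_sum, hsumA]
    congr 1
    exact Finset.sum_congr rfl fun i _ => hset_int i
  rw [heq]
  have hsum_ge : ∑ i, (1/2 : ℝ) * ∫ ω, g i ω ∂μ
      ≤ ∑ i, (μ (B i)).toReal * ∫ ω, g i ω ∂μ :=
    Finset.sum_le_sum fun i _ =>
      mul_le_mul_of_nonneg_right (hBge i) (hg_int_nonneg i)
  calc (1/2) * ∫ ω, (Finset.univ.sup' (Finset.univ_nonempty_iff.2 ⟨⟨0, hn⟩⟩)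
        fun i => v i ω) ∂μ
      ≤ (1/2) * (t + ∑ i, ∫ ω, g i ω ∂μ) := by
        exact mul_le_mul_of_nonneg_left hmax_int_le (by norm_num)
    _ = t * (1/2) + ∑ i, (1/2 : ℝ) * ∫ ω, g i ω ∂μ := by
        rw [mul_add, Finset.mul_sum, mul_comm (1/2 : ℝ) t]
    _ ≤ t * (1/2) + ∑ i, (μ (B i)).toReal * ∫ ω, g i ω ∂μ := by linarith
end

section
/- The expected number of extreme points of the convex hull of n points drawn independently and uniformly at random from the unit square [0,1]^2 is O(log n). -/
open MeasureTheory ProbabilityTheory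

/-- The unit square `[0,1]² ⊆ ℝ²`. -/
def unitSquare : Set (ℝ × ℝ) := Set.Icc (0:ℝ) 1 ×ˢ Set.Icc (0:ℝ) 1

open Classical in
/-- The number of points among `P 0 ω, ..., P (n-1) ω` that are extreme points of the
convex hull of all of them (i.e., vertices of the convex hull). -/
noncomputable def extremeCount {Ω : Type*} (n : ℕ) (P : Fin n → Ω → ℝ × ℝ) (ω : Ω) : ℕ :=
  (Finset.univ.filter fun i : Fin n =>
    P i ω ∉ convexHull ℝ ((Set.range fun j => P j ω) \ {P i ω})).card

/-! ### Auxiliary definitions -/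

/-- Strict domination of `q` over `p` in the quadrant direction `s`. -/
def sd (s : Bool × Bool) (p q : ℝ × ℝ) : Prop :=
  (if s.1 then p.1 < q.1 else q.1 < p.1) ∧ (if s.2 then p.2 < q.2 else q.2 < p.2)

lemma sd_irrefl (s : Bool × Bool) (p : ℝ × ℝ) : ¬ sd s p p := by
  rcases s with ⟨b1, b2⟩
  cases b1 <;> cases b2 <;> simp [sd]

/-- Sign helper. -/
noncomputable def gb (b : Bool) (t : ℝ) : ℝ := if b then 1 - t else t

/-- The probability weight of the dominating quadrant. -/
noncomputable def wt (s : Bool × Bool) (p : ℝ × ℝ) : ℝ := gb s.1 p.1 * gb s.2 p.2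

lemma gb_mem {b : Bool} {t : ℝ} (ht : t ∈ Set.Icc (0:ℝ) 1) : gb b t ∈ Set.Icc (0:ℝ) 1 := by
  cases b <;> simp [gb] at * <;> constructor <;> linarith [ht.1, ht.2]

lemma wt_mem {s : Bool × Bool} {p : ℝ × ℝ} (hp : p ∈ unitSquare) :
    wt s p ∈ Set.Icc (0:ℝ) 1 := by
  have h1 := gb_mem (b := s.1) hp.1
  have h2 := gb_mem (b := s.2) hp.2
  constructor
  · exact mul_nonneg h1.1 h2.1
  · have : gb s.1 p.1 * gb s.2 p.2 ≤ 1 * 1 :=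
      mul_le_mul h1.2 h2.2 h2.1 zero_le_one
    simpa [wt] using this

lemma continuous_gb (b : Bool) : Continuous (gb b) := by
  cases b
  · have : gb false = fun t => t := by funext t; simp [gb]
    rw [this]; exact continuous_id
  · have : gb true = fun t => 1 - t := by funext t; simp [gb]
    rw [this]; exact continuous_const.sub continuous_id

lemma measurableSet_unitSquare : MeasurableSet unitSquare := by
  rw [unitSquare]; exact measurableSet_Icc.prod measurableSet_Icc

lemma measurableSet_sd (s : Bool × Bool) {α : Type*} [MeasurableSpace α]
    {f g : α → ℝ × ℝ} (hf : Measurable f) (hg : Measurable g) :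
    MeasurableSet {a | sd s (f a) (g a)} := by
  have hf1 := hf.fst; have hf2 := hf.snd; have hg1 := hg.fst; have hg2 := hg.snd
  have : {a | sd s (f a) (g a)} =
      {a | if s.1 then (f a).1 < (g a).1 else (g a).1 < (f a).1} ∩
      {a | if s.2 then (f a).2 < (g a).2 else (g a).2 < (f a).2} := rfl
  rw [this]
  apply MeasurableSet.inter
  · cases s.1
    · simpa using measurableSet_lt hg1 hf1
    · simpa using measurableSet_lt hf1 hg1
  · cases s.2
    · simpa using measurableSet_lt hg2 hf2
    · simpa using measurableSet_lt hf2 hg2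

/-! ### Geometry: extreme points are quadrant-maximal -/

lemma extreme_imp_maximal {n : ℕ} (x : Fin n → ℝ × ℝ) (i : Fin n)
    (h : x i ∉ convexHull ℝ ((Set.range x) \ {x i})) :
    ∃ s : Bool × Bool, ∀ j, ¬ sd s (x i) (x j) := by
  have hfin : ((Set.range x) \ {x i}).Finite := (Set.finite_range x).diff
  obtain ⟨f, u, hfu, hux⟩ := geometric_hahn_banach_closed_point
    (convex_convexHull ℝ _) (hfin.isClosed_convexHull ℝ) h
  have hf : ∀ q : ℝ × ℝ, f q = q.1 * f (1, 0) + q.2 * f (0, 1) := by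
    intro q
    have hq : q = q.1 • ((1:ℝ), (0:ℝ)) + q.2 • ((0:ℝ), (1:ℝ)) := by
      apply Prod.ext <;> simp
    nth_rewrite 1 [hq]
    rw [map_add, f.map_smul, f.map_smul]
    simp [smul_eq_mul]
  set a := f (1, 0) with ha
  set b := f (0, 1) with hb
  refine ⟨(decide (0 ≤ a), decide (0 ≤ b)), fun j hj => ?_⟩
  have hkey1 : 0 ≤ a * ((x j).1 - (x i).1) := by
    rcases hj with ⟨h1, -⟩
    by_cases hpa : 0 ≤ a
    · simp [hpa] at h1
      exact mul_nonneg hpa (by linarith)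
    · simp [hpa] at h1
      push_neg at hpa
      nlinarith
  have hkey2 : 0 ≤ b * ((x j).2 - (x i).2) := by
    rcases hj with ⟨-, h2⟩
    by_cases hpb : 0 ≤ b
    · simp [hpb] at h2
      exact mul_nonneg hpb (by linarith)
    · simp [hpb] at h2
      push_neg at hpb
      nlinarith
  have hne : x j ≠ x i := by
    intro he
    rw [he] at hj
    exact sd_irrefl _ _ hj
  have hmem : x j ∈ convexHull ℝ ((Set.range x) \ {x i}) :=
    subset_convexHull ℝ _ ⟨⟨j, rfl⟩, hne⟩
  have hlt : f (x j) < u := hfu _ hmem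
  have hge : f (x i) ≤ f (x j) := by
    rw [hf (x i), hf (x j)]
    nlinarith [hkey1, hkey2]
  linarith

/-! ### Counting -/

open Classical in
lemma count_le {n : ℕ} (x : Fin n → ℝ × ℝ) :
    (((Finset.univ.filter fun i : Fin n =>
        x i ∉ convexHull ℝ ((Set.range x) \ {x i})).card : ℝ)) ≤
      ∑ s : Bool × Bool,
        (((Finset.univ.filter fun i : Fin n => ∀ j, ¬ sd s (x i) (x j)).card : ℝ)) := by
  have hsub : (Finset.univ.filter fun i : Fin n =>
        x i ∉ convexHull ℝ ((Set.range x) \ {x i})) ⊆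
      Finset.univ.biUnion fun s : Bool × Bool =>
        Finset.univ.filter fun i : Fin n => ∀ j, ¬ sd s (x i) (x j) := by
    intro i hi
    rw [Finset.mem_filter] at hi
    obtain ⟨s, hs⟩ := extreme_imp_maximal x i hi.2
    exact Finset.mem_biUnion.2 ⟨s, Finset.mem_univ _, Finset.mem_filter.2 ⟨Finset.mem_univ _, hs⟩⟩
  calc (((Finset.univ.filter fun i : Fin n =>
        x i ∉ convexHull ℝ ((Set.range x) \ {x i})).card : ℝ))
      ≤ ((Finset.univ.biUnion fun s : Bool × Bool =>
        Finset.univ.filter fun i : Fin n => ∀ j, ¬ sd s (x i) (x j)).card : ℝ) := by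
        exact_mod_cast Finset.card_le_card hsub
    _ ≤ _ := by
        exact_mod_cast Finset.card_biUnion_le

/-! ### The scalar integral estimates -/

noncomputable def Finn (m : ℕ) (t : ℝ) : ℝ := ∫ y in Set.Icc (0:ℝ) 1, (1 - t * y) ^ m

lemma integral_gb_comp (b : Bool) (f : ℝ → ℝ) :
    ∫ y in Set.Icc (0:ℝ) 1, f (gb b y) = ∫ y in Set.Icc (0:ℝ) 1, f y := by
  cases b
  · simp [gb]
  · simp only [gb, if_true]
    rw [MeasureTheory.integral_Icc_eq_integral_Ioc,
      MeasureTheory.integral_Icc_eq_integral_Ioc,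
      ← intervalIntegral.integral_of_le (zero_le_one), ← intervalIntegral.integral_of_le zero_le_one,
      intervalIntegral.integral_comp_sub_left f 1]
    norm_num

lemma Finn_eq {m : ℕ} {t : ℝ} (ht : t ∈ Set.Ioc (0:ℝ) 1) :
    Finn m t = (1 - (1 - t) ^ (m+1)) / ((m+1) * t) := by
  have ht0 : (0:ℝ) < t := ht.1
  have hne : ((m:ℝ)+1) * t ≠ 0 := by positivity
  have hderiv : ∀ y ∈ Set.uIcc (0:ℝ) 1,
      HasDerivAt (fun y : ℝ => -(1 - t * y) ^ (m+1) / (((m:ℝ)+1) * t)) ((1 - t * y) ^ m) y := by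
    intro y _
    have h1 : HasDerivAt (fun y : ℝ => 1 - t * y) (-t) y := by
      simpa using ((hasDerivAt_id y).const_mul t).const_sub 1
    have h2 : HasDerivAt (fun y : ℝ => (1 - t * y) ^ (m+1))
        (((m:ℕ)+1 : ℕ) * (1 - t * y) ^ m * (-t)) y := h1.pow (m+1)
    have h3 := (h2.neg).div_const (((m:ℝ)+1) * t)
    refine h3.congr_deriv ?_
    push_cast
    field_simp
  have hInt : IntervalIntegrable (fun y : ℝ => (1 - t * y) ^ m) volume 0 1 :=
    (by continuity : Continuous fun y : ℝ => (1 - t * y) ^ m).intervalIntegrable 0 1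
  have := intervalIntegral.integral_eq_sub_of_hasDerivAt hderiv hInt
  rw [Finn, MeasureTheory.integral_Icc_eq_integral_Ioc,
    ← intervalIntegral.integral_of_le zero_le_one, this]
  field_simp
  ring

lemma Finn_le {m : ℕ} {t : ℝ} (ht : t ∈ Set.Ioc (0:ℝ) 1) :
    Finn m t ≤ min 1 (1 / (((m:ℝ)+1) * t)) := by
  have ht0 : (0:ℝ) < t := ht.1
  have hpos : (0:ℝ) < ((m:ℝ)+1) * t := by positivity
  rw [Finn_eq ht]
  have hb : 1 - ((m:ℝ)+1) * t ≤ (1 - t) ^ (m+1) := by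
    have h2 : t ≤ 1 := ht.2
    have := one_add_mul_le_pow (a := -t) (by linarith) (m+1)
    have h' : (1:ℝ) + -t = 1 - t := by ring
    rw [h'] at this
    push_cast at this
    linarith
  have hnn : (0:ℝ) ≤ (1 - t) ^ (m+1) := pow_nonneg (by linarith [ht.2]) _
  apply le_min
  · rw [div_le_one hpos]; push_cast; linarith
  · gcongr
    linarith

lemma integrableOn_H (m : ℕ) {a b : ℝ} (h : Set.Ioc a b ⊆ Set.Ioc 0 1) :
    IntegrableOn (fun t : ℝ => min 1 (1 / (((m:ℝ)+1) * t))) (Set.Ioc a b) volume := by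
  apply Integrable.mono' (integrable_const (1:ℝ))
  · apply Measurable.aestronglyMeasurable
    apply Measurable.min measurable_const
    fun_prop
  · filter_upwards [ae_restrict_mem measurableSet_Ioc] with t ht
    have ht' := h ht
    have htp : 0 < t := ht'.1
    have h1 : (0:ℝ) ≤ 1 / (((m:ℝ)+1) * t) := by positivity
    rw [Real.norm_eq_abs, abs_of_nonneg (le_min zero_le_one h1)]
    exact min_le_left _ _

lemma integral_Finn_le (m : ℕ) :
    ∫ t in Set.Icc (0:ℝ) 1, Finn m t ≤ (1 + Real.log (m+1)) / (m+1) := by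
  set c : ℝ := 1 / ((m:ℝ)+1) with hc
  have hm1 : (0:ℝ) < (m:ℝ)+1 := by positivity
  have hc0 : 0 < c := by positivity
  have hc1 : c ≤ 1 := by
    rw [hc, div_le_one hm1]; linarith [Nat.cast_nonneg (α := ℝ) m]
  set H : ℝ → ℝ := fun t => min 1 (1 / (((m:ℝ)+1) * t)) with hH
  have step1 : ∫ t in Set.Icc (0:ℝ) 1, Finn m t ≤ ∫ t in Set.Ioc (0:ℝ) 1, H t := by
    rw [MeasureTheory.integral_Icc_eq_integral_Ioc]
    apply setIntegral_mono_on ?_ (integrableOn_H m subset_rfl) measurableSet_Ioc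
      (fun t ht => Finn_le (m := m) ht)
    · -- IntegrableOn Finn
      apply Integrable.mono' (integrable_const (1:ℝ))
      · apply AEStronglyMeasurable.congr
          (f := fun t => (1 - (1 - t) ^ (m+1)) / (((m:ℝ)+1) * t))
        · apply Measurable.aestronglyMeasurable; fun_prop
        · filter_upwards [ae_restrict_mem measurableSet_Ioc] with t ht
          exact (Finn_eq ht).symm
      · filter_upwards [ae_restrict_mem measurableSet_Ioc] with t ht
        have h1 := Finn_le (m := m) ht
        have h2 : 0 ≤ Finn m t := by
          rw [Finn_eq ht]
          have hb : (1 - t) ^ (m+1) ≤ 1 := by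
            apply pow_le_one₀ (by linarith [ht.2]) (by linarith [ht.1])
          have hd : 0 < ((m:ℝ)+1) * t := by have := ht.1; positivity
          exact div_nonneg (by linarith) hd.le
        rw [Real.norm_eq_abs, abs_of_nonneg h2]
        exact h1.trans (min_le_left _ _)
  have step2 : ∫ t in Set.Ioc (0:ℝ) 1, H t
      = (∫ t in Set.Ioc (0:ℝ) c, H t) + ∫ t in Set.Ioc c 1, H t := by
    rw [← MeasureTheory.setIntegral_union]
    · rw [Set.Ioc_union_Ioc_eq_Ioc (le_of_lt hc0) hc1]
    · exact Set.Ioc_disjoint_Ioc_of_le le_rfl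
    · exact measurableSet_Ioc
    · exact integrableOn_H m (Set.Ioc_subset_Ioc_right hc1)
    · exact integrableOn_H m (Set.Ioc_subset_Ioc_left hc0.le)
  have step3 : ∫ t in Set.Ioc (0:ℝ) c, H t ≤ c := by
    have : ∫ t in Set.Ioc (0:ℝ) c, H t ≤ ∫ _t in Set.Ioc (0:ℝ) c, (1:ℝ) := by
      apply setIntegral_mono_on (integrableOn_H m (Set.Ioc_subset_Ioc_right hc1))
        (integrableOn_const (by rw [Real.volume_Ioc]; exact ENNReal.ofReal_ne_top))
        measurableSet_Ioc
      intro t _; exact min_le_left _ _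
    apply this.trans
    rw [setIntegral_const, measureReal_def, Real.volume_Ioc, smul_eq_mul, mul_one,
      ENNReal.toReal_ofReal (by linarith)]
    linarith
  have step4 : ∫ t in Set.Ioc c 1, H t ≤ Real.log ((m:ℝ)+1) / ((m:ℝ)+1) := by
    have hle : ∫ t in Set.Ioc c 1, H t ≤ ∫ t in Set.Ioc c 1, (1/((m:ℝ)+1)) * (1/t) := by
      apply setIntegral_mono_on (integrableOn_H m (Set.Ioc_subset_Ioc_left hc0.le)) ?_
        measurableSet_Ioc
      · intro t ht
        refine (min_le_right _ _).trans_eq ?_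
        field_simp
      · apply Integrable.const_mul
        apply IntegrableOn.mono_set ?_ (Set.Ioc_subset_Icc_self)
        apply ContinuousOn.integrableOn_compact isCompact_Icc
        apply ContinuousOn.div continuousOn_const continuousOn_id
        intro t ht; exact ne_of_gt (lt_of_lt_of_le hc0 ht.1)
    apply hle.trans
    rw [← intervalIntegral.integral_of_le hc1, intervalIntegral.integral_const_mul,
      integral_one_div (by intro h; rw [Set.mem_uIcc] at h; rcases h with ⟨h1,h2⟩|⟨h1,h2⟩ <;> linarith)]
    simp only [hc, one_div, inv_inv, one_mul]
    rw [div_eq_mul_inv, mul_comm]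
  calc ∫ t in Set.Icc (0:ℝ) 1, Finn m t
      ≤ (∫ t in Set.Ioc (0:ℝ) c, H t) + ∫ t in Set.Ioc c 1, H t := by
        rw [← step2]; exact step1
    _ ≤ c + Real.log ((m:ℝ)+1) / ((m:ℝ)+1) := add_le_add step3 step4
    _ = (1 + Real.log ((m:ℝ)+1)) / ((m:ℝ)+1) := by rw [hc]; ring

/-! ### Measure computations -/

noncomputable def nu : Measure (ℝ × ℝ) := volume.restrict unitSquare

instance : IsProbabilityMeasure (volume.restrict unitSquare) := by
  constructor
  rw [Measure.restrict_apply_univ, unitSquare, Measure.volume_eq_prod,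
    Measure.prod_prod, Real.volume_Icc]
  norm_num

instance : IsProbabilityMeasure nu := by rw [nu]; infer_instance

lemma integrable_pow_wt (m : ℕ) (s : Bool × Bool) :
    Integrable (fun p : ℝ × ℝ => (1 - wt s p) ^ m) (volume.restrict unitSquare) := by
  have hcont : Continuous fun p : ℝ × ℝ => (1 - wt s p) ^ m := by
    apply Continuous.pow
    apply Continuous.sub continuous_const
    exact ((continuous_gb s.1).comp continuous_fst).mul ((continuous_gb s.2).comp continuous_snd)
  apply Integrable.mono' (integrable_const (1:ℝ)) hcont.aestronglyMeasurable
  filter_upwards [ae_restrict_mem measurableSet_unitSquare] with p hp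
  have hw := wt_mem (s := s) hp
  rw [Real.norm_eq_abs, abs_pow]
  apply pow_le_one₀ (abs_nonneg _)
  rw [abs_le]
  constructor <;> [linarith [hw.2]; linarith [hw.1]]

lemma square_integral_le (m : ℕ) (s : Bool × Bool) :
    ∫ p in unitSquare, (1 - wt s p) ^ m ≤ (1 + Real.log (m+1)) / (m+1) := by
  have hInt := integrable_pow_wt m s
  have key : ∫ p in unitSquare, (1 - wt s p) ^ m
      = ∫ x in Set.Icc (0:ℝ) 1, ∫ y in Set.Icc (0:ℝ) 1, (1 - gb s.1 x * gb s.2 y) ^ m := by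
    rw [show (volume : Measure (ℝ × ℝ)).restrict unitSquare
        = ((volume : Measure ℝ).restrict (Set.Icc 0 1)).prod
          ((volume : Measure ℝ).restrict (Set.Icc 0 1)) by
      rw [Measure.prod_restrict, unitSquare, ← Measure.volume_eq_prod]]
    rw [MeasureTheory.integral_prod _ (by
      rw [show ((volume : Measure ℝ).restrict (Set.Icc 0 1)).prod
          ((volume : Measure ℝ).restrict (Set.Icc 0 1))
          = (volume : Measure (ℝ × ℝ)).restrict unitSquare by
        rw [Measure.prod_restrict, unitSquare, ← Measure.volume_eq_prod]]
      exact hInt)]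
    rfl
  rw [key]
  have inner : ∀ x : ℝ, ∫ y in Set.Icc (0:ℝ) 1, (1 - gb s.1 x * gb s.2 y) ^ m
      = Finn m (gb s.1 x) := by
    intro x
    rw [Finn, ← integral_gb_comp s.2 (fun u => (1 - gb s.1 x * u) ^ m)]
  simp_rw [inner]
  rw [integral_gb_comp s.1 (Finn m)]
  exact integral_Finn_le m

/-- Interval for one coordinate of the dominance region. -/
def ib (b : Bool) (a : ℝ) : Set ℝ := if b then Set.Ioi a else Set.Iio a

lemma volume_ib_inter {b : Bool} {a : ℝ} (ha : a ∈ Set.Icc (0:ℝ) 1) :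
    volume (ib b a ∩ Set.Icc 0 1) = ENNReal.ofReal (gb b a) := by
  cases b
  · have : ib false a ∩ Set.Icc 0 1 = Set.Ico 0 a := by
      ext t
      simp only [show ib false a = Set.Iio a from rfl, Set.mem_inter_iff, Set.mem_Iio,
        Set.mem_Icc, Set.mem_Ico]
      constructor
      · rintro ⟨h1, h2, h3⟩; exact ⟨h2, h1⟩
      · rintro ⟨h1, h2⟩; exact ⟨h2, h1, by linarith [ha.2]⟩
    rw [this, Real.volume_Ico]
    simp [gb]
  · have : ib true a ∩ Set.Icc 0 1 = Set.Ioc a 1 := by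
      ext t
      simp only [show ib true a = Set.Ioi a from rfl, Set.mem_inter_iff, Set.mem_Ioi,
        Set.mem_Icc, Set.mem_Ioc]
      constructor
      · rintro ⟨h1, h2, h3⟩; exact ⟨h1, h3⟩
      · rintro ⟨h1, h2⟩; exact ⟨h1, by linarith [ha.1], h2⟩
    rw [this, Real.volume_Ioc]
    simp [gb]

lemma sd_set_eq (s : Bool × Bool) (p : ℝ × ℝ) :
    {q : ℝ × ℝ | sd s p q} = ib s.1 p.1 ×ˢ ib s.2 p.2 := by
  ext q
  rcases s with ⟨b1, b2⟩
  cases b1 <;> cases b2 <;>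
    simp [sd, ib, Set.mem_prod, and_comm]

lemma nu_quadrant {s : Bool × Bool} {p : ℝ × ℝ} (hp : p ∈ unitSquare) :
    nu {q | ¬ sd s p q} = ENNReal.ofReal (1 - wt s p) := by
  have hcompl : {q : ℝ × ℝ | ¬ sd s p q} = {q : ℝ × ℝ | sd s p q}ᶜ := rfl
  have hmeas : MeasurableSet {q : ℝ × ℝ | sd s p q} :=
    measurableSet_sd s measurable_const measurable_id
  have hsd : nu {q : ℝ × ℝ | sd s p q} = ENNReal.ofReal (wt s p) := by
    rw [sd_set_eq, nu, Measure.restrict_apply (by rw [← sd_set_eq s p]; exact hmeas),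
      unitSquare, Set.prod_inter_prod, Measure.volume_eq_prod, Measure.prod_prod,
      volume_ib_inter hp.1, volume_ib_inter hp.2, ← ENNReal.ofReal_mul (gb_mem hp.1).1]
    rfl
  rw [hcompl, measure_compl hmeas (measure_ne_top _ _), hsd]
  rw [measure_univ, ← ENNReal.ofReal_one, ← ENNReal.ofReal_sub _ (wt_mem hp).1]

lemma pi_measure_bound {m : ℕ} (s : Bool × Bool) (i : Fin (m+1)) :
    ((Measure.pi fun _ : Fin (m+1) => nu)
        {x | ∀ j, ¬ sd s (x i) (x j)}).toReal ≤
      (1 + Real.log (m+1)) / (m+1) := by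
  set π' : Measure (Fin m → ℝ × ℝ) := Measure.pi fun _ => nu with hπ'
  have hmp := measurePreserving_piFinSuccAbove (fun _ : Fin (m+1) => nu) i
  set D : Set ((ℝ × ℝ) × (Fin m → ℝ × ℝ)) := {z | ∀ j, ¬ sd s z.1 (z.2 j)} with hDdef
  have hD : MeasurableSet D := by
    have : D = ⋂ j : Fin m, {z : (ℝ × ℝ) × (Fin m → ℝ × ℝ) | sd s z.1 (z.2 j)}ᶜ := by
      ext z; simp [hDdef]
    rw [this]
    exact MeasurableSet.iInter fun j =>
      (measurableSet_sd s measurable_fst ((measurable_pi_apply j).comp measurable_snd)).compl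
  have hCD : {x : Fin (m+1) → ℝ × ℝ | ∀ j, ¬ sd s (x i) (x j)}
      = (MeasurableEquiv.piFinSuccAbove (fun _ : Fin (m+1) => ℝ × ℝ) i) ⁻¹' D := by
    ext x
    simp only [Set.mem_preimage, Set.mem_setOf_eq, hDdef]
    constructor
    · intro h j
      exact h _
    · intro h j
      rcases eq_or_ne j i with rfl | hne
      · exact sd_irrefl s (x j)
      · obtain ⟨k, hk⟩ := Fin.exists_succAbove_eq hne
        rw [← hk]
        exact h k
  have hmeasure : (Measure.pi fun _ : Fin (m+1) => nu)
      {x | ∀ j, ¬ sd s (x i) (x j)} = (nu.prod π') D := by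
    rw [hCD]
    exact hmp.measure_preimage hD.nullMeasurableSet
  have hprod : (nu.prod π') D = ∫⁻ p, (nu {q | ¬ sd s p q}) ^ m ∂nu := by
    rw [Measure.prod_apply hD]
    congr 1
    funext p
    have : Prod.mk p ⁻¹' D = Set.pi Set.univ (fun _ : Fin m => {q | ¬ sd s p q}) := by
      ext y; simp [hDdef, Set.mem_pi]
    rw [this, hπ', Measure.pi_pi]
    simp [Finset.prod_const]
  have hae : ∀ᵐ p ∂nu, p ∈ unitSquare := by
    rw [nu]; exact ae_restrict_mem measurableSet_unitSquare
  have hInt' : Integrable (fun p : ℝ × ℝ => (1 - wt s p) ^ m) nu := by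
    rw [nu]; exact integrable_pow_wt m s
  have hnn' : 0 ≤ᵐ[nu] fun p : ℝ × ℝ => (1 - wt s p) ^ m := by
    filter_upwards [hae] with p hp
    exact pow_nonneg (by linarith [(wt_mem (s := s) hp).2]) m
  have hlint : ∫⁻ p, (nu {q | ¬ sd s p q}) ^ m ∂nu
      = ENNReal.ofReal (∫ p in unitSquare, (1 - wt s p) ^ m) := by
    calc ∫⁻ p, (nu {q | ¬ sd s p q}) ^ m ∂nu
        = ∫⁻ p, ENNReal.ofReal ((1 - wt s p) ^ m) ∂nu := by
          apply lintegral_congr_ae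
          filter_upwards [hae] with p hp
          rw [nu_quadrant hp, ← ENNReal.ofReal_pow (by linarith [(wt_mem (s := s) hp).2])]
      _ = ENNReal.ofReal (∫ p, (1 - wt s p) ^ m ∂nu) :=
          (ofReal_integral_eq_lintegral_ofReal hInt' hnn').symm
      _ = ENNReal.ofReal (∫ p in unitSquare, (1 - wt s p) ^ m) := by rw [nu]
  rw [hmeasure, hprod, hlint, ENNReal.toReal_ofReal]
  · exact square_integral_le m s
  · apply integral_nonneg_of_ae
    filter_upwards [ae_restrict_mem measurableSet_unitSquare] with p hp
    exact pow_nonneg (by linarith [(wt_mem (s := s) hp).2]) m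

/-! ### Main theorem -/

/-- The expected number of extreme points of the convex hull of `n` points drawn
independently and uniformly at random from the unit square is `O(log n)`. -/
theorem expected_hull_vertices_log :
    ∃ C : ℝ, 0 < C ∧ ∀ (n : ℕ), 2 ≤ n →
      ∀ (Ω : Type) (_ : MeasurableSpace Ω) (μ : Measure Ω), IsProbabilityMeasure μ →
      ∀ P : Fin n → Ω → ℝ × ℝ, (∀ i, Measurable (P i)) →
      iIndepFun P μ →
      (∀ i, Measure.map (P i) μ = volume.restrict unitSquare) →
      ∫ ω, (extremeCount n P ω : ℝ) ∂μ ≤ C * Real.log n := by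
  classical
  refine ⟨10, by norm_num, ?_⟩
  intro n hn Ω mΩ μ hμ P hP hindep hmap
  obtain ⟨m, rfl⟩ : ∃ m, n = m + 1 := ⟨n - 1, by omega⟩
  have hm1cast : ((m+1 : ℕ) : ℝ) = (m:ℝ) + 1 := by push_cast; ring
  have hlogn : (2:ℝ)/3 ≤ Real.log ((m+1 : ℕ) : ℝ) := by
    have h2 : (2:ℝ) ≤ ((m+1 : ℕ) : ℝ) := by exact_mod_cast hn
    calc (2:ℝ)/3 ≤ Real.log 2 := by nlinarith [Real.log_two_gt_d9]
      _ ≤ Real.log ((m+1 : ℕ) : ℝ) := Real.log_le_log (by norm_num) h2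
  set A : Bool × Bool → Fin (m+1) → Set Ω :=
    fun s i => {ω | ∀ j, ¬ sd s (P i ω) (P j ω)} with hA
  have hAmeas : ∀ s i, MeasurableSet (A s i) := by
    intro s i
    have : A s i = ⋂ j, {ω | sd s (P i ω) (P j ω)}ᶜ := by ext ω; simp [hA]
    rw [this]
    exact MeasurableSet.iInter fun j => (measurableSet_sd s (hP i) (hP j)).compl
  have hbound : ∀ s i, (μ (A s i)).toReal ≤ (1 + Real.log ((m+1:ℕ):ℝ)) / ((m+1:ℕ):ℝ) := by
    intro s i
    set Φ : Ω → Fin (m+1) → ℝ × ℝ := fun ω i => P i ω with hΦdef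
    have hΦmeas : Measurable Φ := measurable_pi_lambda _ hP
    have hmappi : μ.map Φ = Measure.pi (fun _ : Fin (m+1) => nu) := by
      refine (Measure.pi_eq ?_).symm
      intro sets hsets
      rw [Measure.map_apply hΦmeas (MeasurableSet.univ_pi hsets)]
      have hpre : Φ ⁻¹' (Set.univ.pi sets) = ⋂ i ∈ Finset.univ, P i ⁻¹' sets i := by
        ext ω; simp [hΦdef, Set.mem_pi]
      rw [hpre, hindep.measure_inter_preimage_eq_mul Finset.univ (fun i _ => hsets i)]
      apply Finset.prod_congr rfl
      intro i _
      rw [← Measure.map_apply (hP i) (hsets i), hmap i, nu]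
    have hCmeas : MeasurableSet {x : Fin (m+1) → ℝ × ℝ | ∀ j, ¬ sd s (x i) (x j)} := by
      have : {x : Fin (m+1) → ℝ × ℝ | ∀ j, ¬ sd s (x i) (x j)}
          = ⋂ j, {x : Fin (m+1) → ℝ × ℝ | sd s (x i) (x j)}ᶜ := by ext; simp
      rw [this]
      exact MeasurableSet.iInter fun j =>
        (measurableSet_sd s (measurable_pi_apply i) (measurable_pi_apply j)).compl
    have hpre2 : A s i = Φ ⁻¹' {x : Fin (m+1) → ℝ × ℝ | ∀ j, ¬ sd s (x i) (x j)} := rfl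
    rw [hpre2, ← Measure.map_apply hΦmeas hCmeas, hmappi]
    have := pi_measure_bound s i
    rw [hm1cast]
    push_cast at this ⊢
    exact this
  set N : Bool × Bool → Ω → ℕ := fun s ω =>
    (Finset.univ.filter fun i : Fin (m+1) => ∀ j, ¬ sd s (P i ω) (P j ω)).card with hN
  have hNind : ∀ s, (fun ω => (N s ω : ℝ))
      = fun ω => ∑ i : Fin (m+1), (A s i).indicator (fun _ => (1:ℝ)) ω := by
    intro s
    funext ω
    have hcf : N s ω = ∑ i : Fin (m+1),
        if (∀ j, ¬ sd s (P i ω) (P j ω)) then 1 else 0 := Finset.card_filter _ _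
    rw [hcf]
    push_cast
    apply Finset.sum_congr rfl
    intro i _
    by_cases h : ∀ j, ¬ sd s (P i ω) (P j ω) <;>
      simp [h, Set.indicator_apply, hA]
  have hNint : ∀ s, Integrable (fun ω => (N s ω : ℝ)) μ := by
    intro s
    rw [hNind s]
    exact integrable_finset_sum _ fun i _ =>
      (integrable_const (1:ℝ)).indicator (hAmeas s i)
  set g : Ω → ℝ := fun ω => ∑ s : Bool × Bool, (N s ω : ℝ) with hg
  have hgint : Integrable g μ := integrable_finset_sum _ fun s _ => hNint s
  have hintN : ∀ s, ∫ ω, (N s ω : ℝ) ∂μ = ∑ i : Fin (m+1), (μ (A s i)).toReal := by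
    intro s
    rw [hNind s, integral_finset_sum _ fun i _ =>
      (integrable_const (1:ℝ)).indicator (hAmeas s i)]
    apply Finset.sum_congr rfl
    intro i _
    rw [integral_indicator_const (1:ℝ) (hAmeas s i), smul_eq_mul, mul_one, measureReal_def]
  have hintg : ∫ ω, g ω ∂μ
      ≤ 4 * (1 + Real.log ((m+1:ℕ):ℝ)) / ((m+1:ℕ):ℝ) * ((m+1:ℕ):ℝ) := by
    rw [hg, integral_finset_sum _ fun s _ => hNint s]
    have : ∀ s : Bool × Bool, ∫ ω, (N s ω : ℝ) ∂μ
        ≤ (1 + Real.log ((m+1:ℕ):ℝ)) / ((m+1:ℕ):ℝ) * ((m+1:ℕ):ℝ) := by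
      intro s
      rw [hintN s]
      calc ∑ i : Fin (m+1), (μ (A s i)).toReal
          ≤ ∑ _i : Fin (m+1), (1 + Real.log ((m+1:ℕ):ℝ)) / ((m+1:ℕ):ℝ) :=
            Finset.sum_le_sum fun i _ => hbound s i
        _ = (1 + Real.log ((m+1:ℕ):ℝ)) / ((m+1:ℕ):ℝ) * ((m+1:ℕ):ℝ) := by
            rw [Finset.sum_const, Finset.card_univ, Fintype.card_fin, nsmul_eq_mul]
            ring
    calc ∑ s : Bool × Bool, ∫ ω, (N s ω : ℝ) ∂μ
        ≤ ∑ _s : Bool × Bool, (1 + Real.log ((m+1:ℕ):ℝ)) / ((m+1:ℕ):ℝ) * ((m+1:ℕ):ℝ) :=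
          Finset.sum_le_sum fun s _ => this s
      _ = 4 * ((1 + Real.log ((m+1:ℕ):ℝ)) / ((m+1:ℕ):ℝ) * ((m+1:ℕ):ℝ)) := by
          rw [Finset.sum_const, Finset.card_univ]
          norm_num [Fintype.card_prod]
      _ = 4 * (1 + Real.log ((m+1:ℕ):ℝ)) / ((m+1:ℕ):ℝ) * ((m+1:ℕ):ℝ) := by ring
  have hfinal : 4 * (1 + Real.log ((m+1:ℕ):ℝ)) / ((m+1:ℕ):ℝ) * ((m+1:ℕ):ℝ)
      ≤ 10 * Real.log ((m+1:ℕ):ℝ) := by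
    have hpos : (0:ℝ) < ((m+1:ℕ):ℝ) := by
      rw [hm1cast]; positivity
    have heq : 4 * (1 + Real.log ((m+1:ℕ):ℝ)) / ((m+1:ℕ):ℝ) * ((m+1:ℕ):ℝ)
        = 4 * (1 + Real.log ((m+1:ℕ):ℝ)) := by field_simp
    rw [heq]
    nlinarith [hlogn]
  by_cases hint : Integrable (fun ω => (extremeCount (m+1) P ω : ℝ)) μ
  · have hle : ∀ ω, (extremeCount (m+1) P ω : ℝ) ≤ g ω := by
      intro ω
      have := count_le (fun i => P i ω)
      exact this
    calc ∫ ω, (extremeCount (m+1) P ω : ℝ) ∂μ ≤ ∫ ω, g ω ∂μ :=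
          integral_mono hint hgint hle
      _ ≤ 4 * (1 + Real.log ((m+1:ℕ):ℝ)) / ((m+1:ℕ):ℝ) * ((m+1:ℕ):ℝ) := hintg
      _ ≤ 10 * Real.log ((m+1:ℕ):ℝ) := hfinal
  · rw [integral_undef hint]
    have h0 : (0:ℝ) ≤ Real.log ((m+1:ℕ):ℝ) := le_trans (by norm_num) hlogn
    nlinarith
end

section
/- In the planted clique model with clique size k ≥ a·√(n·log n) for a sufficiently large constant a, with probability 1−o(1) as n → ∞, every vertex of the planted clique has degree strictly greater than every vertex outside the planted clique; hence the k highest-degree vertices are exactly the planted clique. -/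
open MeasureTheory ProbabilityTheory

/-- Index type for the potential edges of a graph on vertex set `Fin n`. -/
def EdgeIdx (n : ℕ) := {p : Fin n × Fin n // p.1 < p.2}

instance (n : ℕ) : Fintype (EdgeIdx n) := by unfold EdgeIdx; infer_instance

/-- Adjacency in the planted clique model: `u` and `v` are adjacent at `ω` if they are
distinct and either both lie in the planted clique `Q`, or their edge is present in the
underlying `G(n,1/2)` sample. -/
def plantedAdj {Ω : Type*} {n : ℕ} (A : EdgeIdx n → Set Ω) (Q : Finset (Fin n))
    (ω : Ω) (u v : Fin n) : Prop :=
  u ≠ v ∧ ((u ∈ Q ∧ v ∈ Q) ∨ ∃ e : EdgeIdx n, (e.val = (u, v) ∨ e.val = (v, u)) ∧ ω ∈ A e)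

open Classical in
/-- The degree of vertex `v` in the planted clique model at sample `ω`. -/
noncomputable def plantedDegree {Ω : Type*} {n : ℕ} (A : EdgeIdx n → Set Ω)
    (Q : Finset (Fin n)) (ω : Ω) (v : Fin n) : ℕ :=
  (Finset.univ.filter fun u : Fin n => plantedAdj A Q ω u v).card

open Real

section Prob

lemma mgf_indicator_half {Ω : Type*} [MeasurableSpace Ω] {μ : Measure Ω}
    [IsProbabilityMeasure μ] {B : Set Ω} (hB : MeasurableSet B) (hp : μ B = 1/2) (r : ℝ) :
    mgf (B.indicator fun _ => (1:ℝ)) μ r = (1 + exp r) / 2 := by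
  have h1 : (fun ω => exp (r * B.indicator (fun _ => (1:ℝ)) ω))
      = fun ω => 1 + (exp r - 1) * B.indicator (fun _ => (1:ℝ)) ω := by
    funext ω
    by_cases h : ω ∈ B
    · simp [Set.indicator_of_mem h]
    · simp [Set.indicator_of_notMem h]
  have hint : Integrable (B.indicator fun _ => (1:ℝ)) μ :=
    (integrable_const (1:ℝ)).indicator hB
  rw [mgf, h1, integral_add (integrable_const 1) (hint.const_mul _),
    integral_const_mul, integral_indicator_const (1:ℝ) hB, integral_const, measureReal_def, measureReal_def, hp]
  have : ((1:ENNReal)/2).toReal = 1/2 := by simp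
  rw [this]
  simp
  ring

lemma tail_bound {Ω ι : Type*} [MeasurableSpace Ω] {μ : Measure Ω} [IsProbabilityMeasure μ]
    {A : ι → Set Ω} (hA : ∀ i, MeasurableSet (A i)) (hind : iIndepSet A μ)
    (hp : ∀ i, μ (A i) = 1/2) (s : Finset ι) {n : ℕ} (hn : 0 < n) (hcard : s.card ≤ n)
    {t : ℝ} (ht : 0 ≤ t) :
    (μ {ω | (s.card : ℝ)/2 + t ≤ ∑ i ∈ s, (A i).indicator (fun _ => (1:ℝ)) ω}).toReal
        ≤ exp (-2 * t^2 / n)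
    ∧ (μ {ω | ∑ i ∈ s, (A i).indicator (fun _ => (1:ℝ)) ω ≤ (s.card : ℝ)/2 - t}).toReal
        ≤ exp (-2 * t^2 / n) := by
  classical
  set Xi : ι → Ω → ℝ := fun i => (A i).indicator (fun _ => (1:ℝ)) with hXi
  set X : Ω → ℝ := ∑ i ∈ s, Xi i with hX
  have hXapp : ∀ ω, X ω = ∑ i ∈ s, Xi i ω := fun ω => Finset.sum_apply ω s Xi
  have hXimeas : ∀ i, Measurable (Xi i) := fun i => measurable_const.indicator (hA i)
  have hXmeas : Measurable X := by
    rw [hX, Finset.sum_fn]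
    exact Finset.measurable_sum s fun i _ => hXimeas i
  have hXi01 : ∀ i ω, 0 ≤ Xi i ω ∧ Xi i ω ≤ 1 := by
    intro i ω
    by_cases h : ω ∈ A i
    · simp [hXi, Set.indicator_of_mem h]
    · simp [hXi, Set.indicator_of_notMem h]
  have hX0 : ∀ ω, 0 ≤ X ω := fun ω => by
    rw [hXapp]; exact Finset.sum_nonneg fun i _ => (hXi01 i ω).1
  have hXle : ∀ ω, X ω ≤ s.card := fun ω => by
    rw [hXapp]
    calc ∑ i ∈ s, Xi i ω ≤ ∑ _i ∈ s, (1:ℝ) :=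
          Finset.sum_le_sum fun i _ => (hXi01 i ω).2
      _ = s.card := by simp
  have hint : ∀ r : ℝ, Integrable (fun ω => exp (r * X ω)) μ := by
    intro r
    refine Integrable.mono' (integrable_const (exp (|r| * s.card)))
      ((hXmeas.const_mul r).exp.aestronglyMeasurable) (ae_of_all _ fun ω => ?_)
    rw [Real.norm_eq_abs, abs_of_pos (exp_pos _), exp_le_exp]
    calc r * X ω ≤ |r| * X ω := mul_le_mul_of_nonneg_right (le_abs_self r) (hX0 ω)
      _ ≤ |r| * s.card := mul_le_mul_of_nonneg_left (hXle ω) (abs_nonneg r)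
  have hmgf : ∀ r : ℝ, mgf X μ r = ((1 + exp r)/2) ^ s.card := by
    intro r
    rw [hX, (hind.iIndepFun_indicator).mgf_sum hXimeas]
    rw [Finset.prod_congr rfl fun i _ => mgf_indicator_half (hA i) (hp i) r,
      Finset.prod_const]
  have hfac : ∀ r : ℝ, (1 + exp r)/2 ≤ exp (r/2 + r^2/8) := by
    intro r
    have h1 : (1 + exp r)/2 = exp (r/2) * cosh (r/2) := by
      have e1 : exp (r/2) * exp (r/2) = exp r := by rw [← Real.exp_add]; ring_nf
      have e2 : exp (r/2) * exp (-(r/2)) = 1 := by rw [← Real.exp_add]; simp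
      rw [Real.cosh_eq]
      linear_combination (-e1 - e2)/2
    rw [h1, Real.exp_add]
    refine mul_le_mul_of_nonneg_left ?_ (exp_nonneg _)
    calc cosh (r/2) ≤ exp ((r/2)^2/2) := Real.cosh_le_exp_half_sq _
      _ = exp (r^2/8) := by ring_nf
  have hmgf_le : ∀ r : ℝ, mgf X μ r ≤ exp (s.card * (r/2 + r^2/8)) := by
    intro r
    rw [hmgf, mul_comm, Real.exp_mul]
    have h2 : (0:ℝ) ≤ (1 + exp r)/2 := by positivity
    calc ((1 + exp r)/2) ^ s.card ≤ exp (r/2 + r^2/8) ^ s.card :=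
          pow_le_pow_left₀ h2 (hfac r) _
      _ = exp (r/2 + r^2/8) ^ (s.card : ℝ) := by rw [Real.rpow_natCast]
  have hnR : (0:ℝ) < n := Nat.cast_pos.mpr hn
  have hcR : (s.card : ℝ) ≤ n := Nat.cast_le.mpr hcard
  constructor
  · -- upper tail, r = 4t/n
    set r : ℝ := 4 * t / n with hr
    have hr0 : 0 ≤ r := by positivity
    have h := measure_ge_le_exp_mul_mgf (μ := μ) (X := X) ((s.card : ℝ)/2 + t) hr0 (hint r)
    have hev : {ω | (s.card : ℝ)/2 + t ≤ ∑ i ∈ s, Xi i ω} = {ω | (s.card : ℝ)/2 + t ≤ X ω} := by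
      ext ω; simp [hXapp]
    rw [hev]
    refine h.trans ?_
    calc exp (-r * ((s.card : ℝ)/2 + t)) * mgf X μ r
        ≤ exp (-r * ((s.card : ℝ)/2 + t)) * exp (s.card * (r/2 + r^2/8)) :=
          mul_le_mul_of_nonneg_left (hmgf_le r) (exp_nonneg _)
      _ = exp (-r * t + (s.card : ℝ) * r^2/8) := by rw [← Real.exp_add]; ring_nf
      _ ≤ exp (-r * t + (n : ℝ) * r^2/8) := by
          rw [exp_le_exp]; gcongr
      _ = exp (-2 * t^2 / n) := by
          rw [hr]; congr 1; field_simp; ring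
  · set r : ℝ := -(4 * t / n) with hr
    have hr0 : r ≤ 0 := by simp [hr]; positivity
    have h := measure_le_le_exp_mul_mgf (μ := μ) (X := X) ((s.card : ℝ)/2 - t) hr0 (hint r)
    have hev : {ω | ∑ i ∈ s, Xi i ω ≤ (s.card : ℝ)/2 - t} = {ω | X ω ≤ (s.card : ℝ)/2 - t} := by
      ext ω; simp [hXapp]
    rw [hev]
    refine h.trans ?_
    calc exp (-r * ((s.card : ℝ)/2 - t)) * mgf X μ r
        ≤ exp (-r * ((s.card : ℝ)/2 - t)) * exp (s.card * (r/2 + r^2/8)) :=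
          mul_le_mul_of_nonneg_left (hmgf_le r) (exp_nonneg _)
      _ = exp (r * t + (s.card : ℝ) * r^2/8) := by rw [← Real.exp_add]; ring_nf
      _ ≤ exp (r * t + (n : ℝ) * r^2/8) := by
          rw [exp_le_exp]; gcongr
      _ = exp (-2 * t^2 / n) := by
          rw [hr]; congr 1; field_simp; ring

lemma tail_bound' {Ω ι κ : Type*} [MeasurableSpace Ω] {μ : Measure Ω} [IsProbabilityMeasure μ]
    {A : ι → Set Ω} (hA : ∀ i, MeasurableSet (A i)) (hind : iIndepSet A μ)
    (hp : ∀ i, μ (A i) = 1/2) (s : Finset κ) (f : κ → ι)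
    (hf : ∀ x ∈ s, ∀ y ∈ s, f x = f y → x = y)
    {n : ℕ} (hn : 0 < n) (hcard : s.card ≤ n) {t : ℝ} (ht : 0 ≤ t) :
    (μ {ω | (s.card : ℝ)/2 + t ≤ ∑ x ∈ s, (A (f x)).indicator (fun _ => (1:ℝ)) ω}).toReal
        ≤ exp (-2 * t^2 / n)
    ∧ (μ {ω | ∑ x ∈ s, (A (f x)).indicator (fun _ => (1:ℝ)) ω ≤ (s.card : ℝ)/2 - t}).toReal
        ≤ exp (-2 * t^2 / n) := by
  classical
  have hcard' : (s.image f).card = s.card := Finset.card_image_of_injOn hf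
  have hsum : ∀ ω : Ω, ∑ x ∈ s, (A (f x)).indicator (fun _ => (1:ℝ)) ω
      = ∑ i ∈ s.image f, (A i).indicator (fun _ => (1:ℝ)) ω := fun ω =>
    (Finset.sum_image (f := fun i => (A i).indicator (fun _ => (1:ℝ)) ω) (g := f) hf).symm
  have h := tail_bound hA hind hp (s.image f) hn (hcard' ▸ hcard) ht
  simp only [hcard'] at h
  constructor
  · refine le_trans (le_of_eq ?_) h.1
    congr 2
    ext ω
    simp only [Set.mem_setOf_eq, hsum]
  · refine le_trans (le_of_eq ?_) h.2
    congr 2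
    ext ω
    simp only [Set.mem_setOf_eq, hsum]

end Prob

/-- The canonical edge index joining two distinct vertices. -/
def ei {n : ℕ} (u v : Fin n) (h : u ≠ v) : EdgeIdx n :=
  if huv : u < v then ⟨(u, v), huv⟩ else ⟨(v, u), (h.lt_or_gt.resolve_left huv)⟩

lemma ei_val {n : ℕ} (u v : Fin n) (h : u ≠ v) :
    (ei u v h).val = (u, v) ∨ (ei u v h).val = (v, u) := by
  by_cases huv : u < v
  · left; rw [show ei u v h = ⟨(u, v), huv⟩ from dif_pos huv]
  · right; rw [show ei u v h = ⟨(v, u), h.lt_or_gt.resolve_left huv⟩ from dif_neg huv]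

lemma eq_ei_iff {n : ℕ} {u v : Fin n} (h : u ≠ v) (e : EdgeIdx n) :
    (e.val = (u, v) ∨ e.val = (v, u)) ↔ e = ei u v h := by
  constructor
  · rintro (he | he)
    · have hlt : u < v := by have := e.property; rw [he] at this; exact this
      rw [show ei u v h = ⟨(u, v), hlt⟩ from dif_pos hlt]
      exact Subtype.ext he
    · have hlt : v < u := by have := e.property; rw [he] at this; exact this
      rw [show ei u v h = ⟨(v, u), hlt⟩ from dif_neg (asymm hlt)]
      exact Subtype.ext he
  · rintro rfl; exact ei_val u v h

lemma ei_inj {n : ℕ} {u u' v : Fin n} (h : u ≠ v) (h' : u' ≠ v)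
    (he : ei u v h = ei u' v h') : u = u' := by
  have h1 := ei_val u v h
  have h2 := ei_val u' v h'
  rw [he] at h1
  rcases h1 with h1 | h1 <;> rcases h2 with h2 | h2 <;>
      rw [h1] at h2 <;> simp only [Prod.mk.injEq] at h2 <;>
      first
        | exact h2.1
        | exact h2.1.symm
        | exact h2.2
        | exact h2.2.symm
        | exact absurd h2.1 h
        | exact absurd h2.1 h'
        | exact absurd h2.1.symm h
        | exact absurd h2.1.symm h'
        | exact absurd h2.2 h
        | exact absurd h2.2 h'
        | exact absurd h2.2.symm h
        | exact absurd h2.2.symm h'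

section Deg
variable {Ω : Type*} {n : ℕ} (A : EdgeIdx n → Set Ω) (Q : Finset (Fin n)) (ω : Ω)

open Classical

/-- Degree of a clique vertex. -/
lemma degree_in_Q {v : Fin n} (hv : v ∈ Q) :
    plantedDegree A Q ω v = (Q.card - 1) +
      ((Finset.univ.filter fun u : Fin n => u ∉ Q) |>.filter
        fun u => ∃ e : EdgeIdx n, (e.val = (u, v) ∨ e.val = (v, u)) ∧ ω ∈ A e).card := by
  classical
  unfold plantedDegree
  have hsplit : (Finset.univ.filter fun u : Fin n => plantedAdj A Q ω u v)
      = Q.erase v ∪ ((Finset.univ.filter fun u : Fin n => u ∉ Q) |>.filter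
        fun u => ∃ e : EdgeIdx n, (e.val = (u, v) ∨ e.val = (v, u)) ∧ ω ∈ A e) := by
    ext u
    simp only [Finset.mem_union, Finset.mem_filter, Finset.mem_univ, true_and,
      Finset.mem_erase]
    simp only [plantedAdj]
    constructor
    · rintro ⟨hne, hQ | hE⟩
      · exact Or.inl ⟨hne, hQ.1⟩
      · by_cases hu : u ∈ Q
        · exact Or.inl ⟨hne, hu⟩
        · exact Or.inr ⟨hu, hE⟩
    · rintro (⟨hne, hu⟩ | ⟨hu, hE⟩)
      · exact ⟨hne, Or.inl ⟨hu, hv⟩⟩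
      · exact ⟨fun h => hu (h ▸ hv), Or.inr hE⟩
  rw [hsplit, Finset.card_union_of_disjoint, Finset.card_erase_of_mem hv]
  refine Finset.disjoint_left.mpr fun u hu hu' => ?_
  simp only [Finset.mem_erase] at hu
  simp only [Finset.mem_filter] at hu'
  exact hu'.1.2 hu.2

/-- Degree of a non-clique vertex. -/
lemma degree_out_Q {v : Fin n} (hv : v ∉ Q) :
    plantedDegree A Q ω v =
      ((Finset.univ.filter fun u : Fin n => u ≠ v) |>.filter
        fun u => ∃ e : EdgeIdx n, (e.val = (u, v) ∨ e.val = (v, u)) ∧ ω ∈ A e).card := by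
  classical
  unfold plantedDegree
  have hsplit : (Finset.univ.filter fun u : Fin n => plantedAdj A Q ω u v)
      = ((Finset.univ.filter fun u : Fin n => u ≠ v) |>.filter
        fun u => ∃ e : EdgeIdx n, (e.val = (u, v) ∨ e.val = (v, u)) ∧ ω ∈ A e) := by
    ext u
    simp only [Finset.mem_filter, Finset.mem_univ, true_and]
    simp only [plantedAdj, Finset.filter_filter]
    constructor
    · rintro ⟨hne, hQ | hE⟩
      · exact absurd hQ.2 hv
      · exact ⟨hne, hE⟩
    · rintro ⟨hne, hE⟩
      exact ⟨hne, Or.inr hE⟩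
  rw [hsplit]

/-- The random count as a sum of indicators over edge indices. -/
lemma count_eq_sum (T : Finset (Fin n)) {v : Fin n} (g : ∀ x : {u // u ∈ T}, x.1 ≠ v) :
    ((T.filter fun u => ∃ e : EdgeIdx n, (e.val = (u, v) ∨ e.val = (v, u)) ∧ ω ∈ A e).card : ℝ)
      = ∑ x ∈ T.attach, (A (ei x.1 v (g x))).indicator (fun _ => (1:ℝ)) ω := by
  classical
  simp only [Finset.card_filter]
  rw [← Finset.sum_attach T (fun u => if (∃ e : EdgeIdx n,
      (e.val = (u, v) ∨ e.val = (v, u)) ∧ ω ∈ A e) then 1 else 0)]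
  push_cast
  refine Finset.sum_congr rfl fun x _ => ?_
  have hne : x.1 ≠ v := g x
  by_cases hm : ω ∈ A (ei x.1 v hne)
  · rw [if_pos ⟨ei x.1 v hne, ei_val x.1 v hne, hm⟩, Set.indicator_of_mem hm]
  · rw [Set.indicator_of_notMem hm, if_neg]
    rintro ⟨e, he, hme⟩
    rw [(eq_ei_iff hne e).mp he] at hme
    exact hm hme

end Deg

/-- In the planted clique model with clique size `k ≥ a·√(n·log n)` for a sufficiently
large constant `a`, with probability `1 - o(1)` as `n → ∞`, every vertex of the planted
clique has strictly larger degree than every vertex outside it — hence the `k`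
highest-degree vertices are exactly the planted clique. -/
theorem planted_clique_top_degrees :
    ∃ a : ℝ, 0 < a ∧ ∀ δ : ℝ, 0 < δ → ∃ N : ℕ, ∀ n : ℕ, N ≤ n → ∀ k : ℕ,
      a * Real.sqrt (n * Real.log n) ≤ k → k ≤ n →
      ∀ (Ω : Type) (_ : MeasurableSpace Ω) (μ : Measure Ω), IsProbabilityMeasure μ →
      ∀ A : EdgeIdx n → Set Ω, (∀ e, MeasurableSet (A e)) →
      iIndepSet A μ → (∀ e, μ (A e) = 1/2) →
      ∀ Q : Finset (Fin n), Q.card = k →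
      1 - δ ≤ (μ {ω | ∀ v ∈ Q, ∀ u ∉ Q,
          plantedDegree A Q ω u < plantedDegree A Q ω v}).toReal := by
  classical
  refine ⟨9, by norm_num, fun δ hδ => ?_⟩
  refine ⟨max 4 ⌈δ⁻¹⌉₊, fun n hN k hk hkn Ω _ μ hμ A hA hind hp Q hQ => ?_⟩
  have hn4 : 4 ≤ n := le_trans (le_max_left _ _) hN
  have hn0 : 0 < n := by omega
  have hnR : (0:ℝ) < n := by exact_mod_cast hn0
  have hn4R : (4:ℝ) ≤ n := by exact_mod_cast hn4
  have hlog : 1 ≤ Real.log n := by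
    rw [Real.le_log_iff_exp_le hnR]
    calc Real.exp 1 ≤ 2.7182818286 := Real.exp_one_lt_d9.le
      _ ≤ 4 := by norm_num
      _ ≤ n := hn4R
  have hnl4 : (4:ℝ) ≤ n * Real.log n := by
    calc (4:ℝ) ≤ (n:ℝ) := hn4R
      _ = n * 1 := (mul_one _).symm
      _ ≤ n * Real.log n := by gcongr
  have hs2 : (2:ℝ) ≤ Real.sqrt (n * Real.log n) :=
    (Real.le_sqrt (by norm_num) (by linarith)).mpr (by norm_num; linarith)
  set t : ℝ := 2 * Real.sqrt (n * Real.log n) with htdef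
  have ht0 : 0 ≤ t := by positivity
  have ht2 : t^2 = 4 * (n * Real.log n) := by
    rw [htdef, mul_pow, Real.sq_sqrt (by linarith)]; ring
  have hkt : 4 * t + 2 ≤ (k:ℝ) := by
    have h9 : 9 * Real.sqrt (n * Real.log n) ≤ k := hk
    nlinarith [hs2]
  have hk1 : 1 ≤ k := by
    have h0 : (0:ℝ) < k := by linarith
    have : 0 < k := by exact_mod_cast h0
    omega
  -- bad events
  set B : Fin n → Set Ω := fun v =>
    if hv : v ∈ Q then
      {ω | ∑ x ∈ (Finset.univ.filter (fun u : Fin n => u ∉ Q)).attach,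
          (A (ei x.1 v (fun h => (Finset.mem_filter.mp x.2).2 (h ▸ hv)))).indicator
            (fun _ => (1:ℝ)) ω
        ≤ ((Finset.univ.filter (fun u : Fin n => u ∉ Q)).card : ℝ)/2 - t}
    else
      {ω | ((Finset.univ.filter (fun u : Fin n => u ≠ v)).card : ℝ)/2 + t ≤
        ∑ x ∈ (Finset.univ.filter (fun u : Fin n => u ≠ v)).attach,
          (A (ei x.1 v (Finset.mem_filter.mp x.2).2)).indicator (fun _ => (1:ℝ)) ω}
    with hB
  have hBbound : ∀ v, (μ (B v)).toReal ≤ Real.exp (-2*t^2/n) := by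
    intro v
    by_cases hv : v ∈ Q
    · have h := (tail_bound' hA hind hp
        (Finset.univ.filter (fun u : Fin n => u ∉ Q)).attach
        (fun x => ei x.1 v (fun h => (Finset.mem_filter.mp x.2).2 (h ▸ hv)))
        (fun x _ y _ hxy => Subtype.ext (ei_inj _ _ hxy))
        hn0 (by rw [Finset.card_attach]; exact (Finset.card_filter_le _ _).trans (by simp))
        ht0).2
      simp only [Finset.card_attach] at h
      rw [show B v = _ from dif_pos hv]
      exact h
    · have h := (tail_bound' hA hind hp
        (Finset.univ.filter (fun u : Fin n => u ≠ v)).attach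
        (fun x => ei x.1 v (Finset.mem_filter.mp x.2).2)
        (fun x _ y _ hxy => Subtype.ext (ei_inj _ _ hxy))
        hn0 (by rw [Finset.card_attach]; exact (Finset.card_filter_le _ _).trans (by simp))
        ht0).1
      simp only [Finset.card_attach] at h
      rw [show B v = _ from dif_neg hv]
      exact h
  set U : Set Ω := ⋃ v, B v with hUdef
  -- the good event contains the complement of U
  have hsub : Uᶜ ⊆ {ω | ∀ v ∈ Q, ∀ u ∉ Q,
      plantedDegree A Q ω u < plantedDegree A Q ω v} := by
    intro ω hω
    simp only [hUdef, Set.mem_compl_iff, Set.mem_iUnion, not_exists] at hω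
    intro v hv u hu
    have hωv := hω v
    have hωu := hω u
    rw [show B v = _ from dif_pos hv] at hωv
    rw [show B u = _ from dif_neg hu] at hωu
    simp only [Set.mem_setOf_eq, not_le] at hωv hωu
    have hdv := degree_in_Q A Q ω hv
    have hdu := degree_out_Q A Q ω hu
    have hcv := count_eq_sum A ω (Finset.univ.filter (fun u' : Fin n => u' ∉ Q))
        (v := v) (fun x => fun h => (Finset.mem_filter.mp x.2).2 (h ▸ hv))
    have hcu := count_eq_sum A ω (Finset.univ.filter (fun u' : Fin n => u' ≠ u))
        (v := u) (fun x => (Finset.mem_filter.mp x.2).2)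
    have hTQR : (((Finset.univ.filter (fun u' : Fin n => u' ∉ Q)).card : ℕ) : ℝ)
        = (n : ℝ) - k := by
      have h1 : (Finset.univ.filter (fun u' : Fin n => u' ∉ Q)) = Finset.univ \ Q := by
        ext x; simp
      rw [h1, Finset.card_sdiff_of_subset (Finset.subset_univ Q), hQ, Finset.card_univ,
        Fintype.card_fin, Nat.cast_sub hkn]
    have hTuR : (((Finset.univ.filter (fun u' : Fin n => u' ≠ u)).card : ℕ) : ℝ)
        = (n : ℝ) - 1 := by
      have h1 : (Finset.univ.filter (fun u' : Fin n => u' ≠ u)) = Finset.univ \ {u} := by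
        ext x; simp
      rw [h1, Finset.card_sdiff_of_subset (by simp), Finset.card_singleton, Finset.card_univ,
        Fintype.card_fin, Nat.cast_sub (by omega)]
      simp
    have e1 : ((plantedDegree A Q ω u : ℝ))
        = (((Finset.univ.filter (fun u' : Fin n => u' ≠ u)).filter
            (fun w => ∃ e : EdgeIdx n, (e.val = (w, u) ∨ e.val = (u, w)) ∧ ω ∈ A e)).card : ℝ) := by
      exact_mod_cast congrArg (fun m : ℕ => (m : ℝ)) hdu
    have e2 : ((plantedDegree A Q ω v : ℝ)) = ((k:ℝ) - 1)
        + (((Finset.univ.filter (fun u' : Fin n => u' ∉ Q)).filter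
            (fun w => ∃ e : EdgeIdx n, (e.val = (w, v) ∨ e.val = (v, w)) ∧ ω ∈ A e)).card : ℝ) := by
      rw [hdv, hQ]
      push_cast [hk1]
      ring
    rw [hcu] at e1
    rw [hcv] at e2
    rw [hTQR] at hωv
    rw [hTuR] at hωu
    have hR : ((plantedDegree A Q ω u : ℝ)) < ((plantedDegree A Q ω v : ℝ)) := by
      rw [e1, e2]
      have hkR : (1:ℝ) ≤ k := by exact_mod_cast hk1
      linarith
    exact_mod_cast hR
  -- measure of the union of bad events
  have hUbound : (μ U).toReal ≤ n * Real.exp (-2*t^2/n) := by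
    have h1 : μ U ≤ ∑ v : Fin n, μ (B v) :=
      (measure_iUnion_le _).trans_eq (tsum_fintype _)
    have hne : (∑ v : Fin n, μ (B v)) ≠ ⊤ :=
      (ENNReal.sum_lt_top.mpr fun v _ => measure_lt_top μ _).ne
    calc (μ U).toReal ≤ (∑ v : Fin n, μ (B v)).toReal := ENNReal.toReal_mono hne h1
      _ = ∑ v : Fin n, (μ (B v)).toReal := ENNReal.toReal_sum fun v _ => measure_ne_top μ _
      _ ≤ ∑ _v : Fin n, Real.exp (-2*t^2/n) := Finset.sum_le_sum fun v _ => hBbound v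
      _ = n * Real.exp (-2*t^2/n) := by
          rw [Finset.sum_const, Finset.card_univ, Fintype.card_fin, nsmul_eq_mul]
  have hUδ : (μ U).toReal ≤ δ := by
    refine hUbound.trans ?_
    have hexp : Real.exp (-2*t^2/n) = ((n:ℝ)^8)⁻¹ := by
      have h8 : -2*t^2/n = -(8*Real.log n) := by
        rw [ht2]; field_simp; ring
      rw [h8, Real.exp_neg]
      congr 1
      rw [show (8:ℝ)*Real.log n = ((8:ℕ):ℝ)*Real.log n by norm_num, Real.exp_nat_mul,
        Real.exp_log hnR]
    rw [hexp]
    have hn7 : (n:ℝ) * ((n:ℝ)^8)⁻¹ = ((n:ℝ)^7)⁻¹ := by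
      field_simp
    rw [hn7]
    have hδn : δ⁻¹ ≤ (n:ℝ) := by
      calc δ⁻¹ ≤ (⌈δ⁻¹⌉₊ : ℝ) := Nat.le_ceil _
        _ ≤ n := by exact_mod_cast le_trans (le_max_right _ _) hN
    have h1n : (1:ℝ) ≤ n := by linarith
    calc ((n:ℝ)^7)⁻¹ ≤ ((n:ℝ))⁻¹ := by
          apply inv_anti₀ hnR
          calc (n:ℝ) = (n:ℝ)^1 := (pow_one _).symm
            _ ≤ (n:ℝ)^7 := pow_le_pow_right₀ h1n (by norm_num)
      _ ≤ δ := by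
          have := inv_anti₀ (inv_pos.mpr hδ) hδn
          rwa [inv_inv] at this
  -- conclude
  have hmono : (μ Uᶜ).toReal ≤ (μ {ω | ∀ v ∈ Q, ∀ u ∉ Q,
      plantedDegree A Q ω u < plantedDegree A Q ω v}).toReal :=
    ENNReal.toReal_mono (measure_ne_top _ _) (measure_mono hsub)
  have hone : (1:ℝ) ≤ (μ Uᶜ).toReal + (μ U).toReal := by
    have h1 : (1:ENNReal) ≤ μ Uᶜ + μ U := by
      rw [← measure_univ (μ := μ), ← Set.compl_union_self U]
      exact measure_union_le _ _
    calc (1:ℝ) = ((1:ENNReal)).toReal := by simp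
      _ ≤ ((μ Uᶜ) + (μ U)).toReal := ENNReal.toReal_mono
          (ENNReal.add_ne_top.mpr ⟨measure_ne_top _ _, measure_ne_top _ _⟩) h1
      _ = (μ Uᶜ).toReal + (μ U).toReal :=
          ENNReal.toReal_add (measure_ne_top _ _) (measure_ne_top _ _)
  linarith
end
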